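/- Let I be a finite set, μ > 2, and (p⁺ᵢ)_{i∈I} points in ℝᵐ such that the balls B(p⁺ᵢ, 2/μ) (in the sup norm) are mutually disjoint. Let f⁺ : ℝᵐ → ℝᵐ be a map with f⁺(y) = μ(y − p⁺ᵢ) on B(p⁺ᵢ, 2/μ), and K⁺ = ⋃ᵢ B(p⁺ᵢ, 2/μ). Then for every N ≥ 1 the set ⋂_{n=0}^{N−1} (f⁺)⁻ⁿ(K⁺) is a disjoint union of (#I)ᴺ closed balls of radius 2/μᴺ, and the upper box dimension of the maximal forward invariant set Λˢ(K⁺, f⁺) = ⋂_{n≥0}(f⁺)⁻ⁿ(K⁺) equals log(#I)/log(μ). -/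

import Mathlib

noncomputable def coverNum {X : Type*} [PseudoMetricSpace X] (S : Set X) (ε : ℝ) : ℕ :=
  sInf {n : ℕ | ∃ t : Finset X, t.card = n ∧ S ⊆ ⋃ x ∈ t, Metric.ball x ε}

noncomputable def ubDim {X : Type*} [PseudoMetricSpace X] (S : Set X) : ℝ :=
  Filter.limsup (fun ε : ℝ => Real.log (coverNum S ε) / Real.log (1 / ε))
    (nhdsWithin 0 (Set.Ioi 0))


open Metric Set

namespace Stmt4Aux

lemma geom_aux {ρ : ℝ} (h : (1:ℝ) - ρ ≠ 0) (N : ℕ) :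
    1 + ρ * ((1 - ρ^N)/(1-ρ)) = (1 - ρ^(N+1))/(1-ρ) := by
  field_simp; ring

variable {m : ℕ} {I : Type*} [Fintype I] [Nonempty I]

/-- centers of level-N balls -/
noncomputable def ctr (μ : ℝ) (p : I → (Fin m → ℝ)) : (N : ℕ) → (Fin N → I) → (Fin m → ℝ)
  | 0, _ => 0
  | (N+1), s => p (s 0) + μ⁻¹ • ctr μ p N (Fin.tail s)

variable {μ : ℝ} {p : I → (Fin m → ℝ)}

lemma ctr_norm_le (hμ : 2 < μ) (hp : ∀ i, ‖p i‖ < 1) (N : ℕ) (s : Fin N → I) :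
    ‖ctr μ p N s‖ ≤ (1 - μ⁻¹ ^ N) / (1 - μ⁻¹) := by
  have hμ0 : (0:ℝ) < μ := by linarith
  have hρ : (0:ℝ) < μ⁻¹ := by positivity
  have hρ1 : μ⁻¹ < 1 := by
    rw [inv_lt_one_iff₀]; right; linarith
  induction N with
  | zero => simp [ctr]
  | succ N ih =>
    have h1 := ih (Fin.tail s)
    calc ‖ctr μ p (N+1) s‖ ≤ ‖p (s 0)‖ + ‖μ⁻¹ • ctr μ p N (Fin.tail s)‖ := norm_add_le _ _
      _ ≤ 1 + μ⁻¹ * ((1 - μ⁻¹ ^ N) / (1 - μ⁻¹)) := by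
          rw [norm_smul, Real.norm_eq_abs, abs_of_pos hρ]
          gcongr
          exact (hp _).le
      _ = (1 - μ⁻¹ ^ (N+1)) / (1 - μ⁻¹) := geom_aux (by linarith) N

lemma rho_lt_half (hμ : 2 < μ) : μ⁻¹ < 2⁻¹ := by
  have hμ0 : (0:ℝ) < μ := by linarith
  have hρ : (0:ℝ) < μ⁻¹ := by positivity
  have h1 : μ * μ⁻¹ = 1 := mul_inv_cancel₀ (ne_of_gt hμ0)
  nlinarith

/-- level-(N+1) balls sit inside the corresponding level-1 ball -/
lemma ball_subset (hμ : 2 < μ) (hp : ∀ i, ‖p i‖ < 1) (N : ℕ) (s : Fin (N+1) → I) :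
    closedBall (ctr μ p (N+1) s) (2 / μ ^ (N+1)) ⊆ closedBall (p (s 0)) (2 / μ) := by
  have hμ0 : (0:ℝ) < μ := by linarith
  have hρ : (0:ℝ) < μ⁻¹ := by positivity
  have hρ1 : μ⁻¹ < 1 := by rw [inv_lt_one_iff₀]; right; linarith
  intro x hx
  rw [mem_closedBall, dist_eq_norm] at hx ⊢
  have hc : ‖ctr μ p (N+1) s - p (s 0)‖ ≤ μ⁻¹ * ((1 - μ⁻¹ ^ N) / (1 - μ⁻¹)) := by
    have hh : ctr μ p (N+1) s - p (s 0) = μ⁻¹ • ctr μ p N (Fin.tail s) := by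
      simp [ctr]
    rw [hh, norm_smul, Real.norm_eq_abs, abs_of_pos hρ]
    gcongr
    exact ctr_norm_le hμ hp N _
  have key : 2 / μ ^ (N+1) + μ⁻¹ * ((1 - μ⁻¹ ^ N) / (1 - μ⁻¹)) ≤ 2 / μ := by
    have hu1 : μ⁻¹ ^ N ≤ 1 := pow_le_one₀ hρ.le hρ1.le
    have hu0 : (0:ℝ) < μ⁻¹ ^ N := by positivity
    have hρ2 : μ⁻¹ < 2⁻¹ := rho_lt_half hμ
    have h2 : (1 - μ⁻¹ ^ N) / (1 - μ⁻¹) ≤ 2 * (1 - μ⁻¹ ^ N) := by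
      rw [div_le_iff₀ (by linarith)]
      nlinarith
    have h3 : 2 / μ ^ (N+1) = 2 * μ⁻¹ ^ N * μ⁻¹ := by
      rw [div_eq_mul_inv]; ring_nf
    have h4 : 2 / μ = 2 * μ⁻¹ := by rw [div_eq_mul_inv]
    rw [h3, h4]
    nlinarith
  calc ‖x - p (s 0)‖ = ‖(x - ctr μ p (N+1) s) + (ctr μ p (N+1) s - p (s 0))‖ := by
        rw [sub_add_sub_cancel]
    _ ≤ ‖x - ctr μ p (N+1) s‖ + ‖ctr μ p (N+1) s - p (s 0)‖ := norm_add_le _ _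
    _ ≤ 2 / μ ^ (N+1) + μ⁻¹ * ((1 - μ⁻¹ ^ N) / (1 - μ⁻¹)) := by gcongr
    _ ≤ 2 / μ := key

end Stmt4Aux

namespace Stmt4Aux
set_option linter.unusedSectionVars false

variable {m : ℕ} {I : Type*} [Fintype I] [Nonempty I] {μ : ℝ} {p : I → (Fin m → ℝ)}
  {f : (Fin m → ℝ) → (Fin m → ℝ)}

/-- forward image: f maps the (N+1)-ball of s into the N-ball of tail s -/
lemma fwd (hμ : 2 < μ) (hp : ∀ i, ‖p i‖ < 1)
    (hf : ∀ i, ∀ y ∈ Metric.closedBall (p i) (2 / μ), f y = μ • (y - p i))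
    (N : ℕ) (s : Fin (N+1) → I) (x : Fin m → ℝ)
    (hx : x ∈ closedBall (ctr μ p (N+1) s) (2 / μ ^ (N+1))) :
    f x ∈ closedBall (ctr μ p N (Fin.tail s)) (2 / μ ^ N) := by
  have hμ0 : (0:ℝ) < μ := by linarith
  have hxK : x ∈ closedBall (p (s 0)) (2 / μ) := ball_subset hμ hp N s hx
  have hfx : f x = μ • (x - p (s 0)) := hf _ _ hxK
  rw [mem_closedBall, dist_eq_norm] at hx ⊢
  have hkey : f x - ctr μ p N (Fin.tail s) = μ • (x - ctr μ p (N+1) s) := by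
    rw [hfx]
    show μ • (x - p (s 0)) - ctr μ p N (Fin.tail s)
      = μ • (x - (p (s 0) + μ⁻¹ • ctr μ p N (Fin.tail s)))
    rw [smul_sub, smul_sub, smul_add, smul_smul, mul_inv_cancel₀ (ne_of_gt hμ0), one_smul]
    abel
  rw [hkey, norm_smul, Real.norm_eq_abs, abs_of_pos hμ0]
  calc μ * ‖x - ctr μ p (N+1) s‖ ≤ μ * (2 / μ ^ (N+1)) := by gcongr
    _ = 2 / μ ^ N := by field_simp; ring

/-- backward: if x is in the i-ball and f x in the N-ball of t, then x is in the
(N+1)-ball of `Fin.cons i t` -/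
lemma bwd (hμ : 2 < μ)
    (hf : ∀ i, ∀ y ∈ Metric.closedBall (p i) (2 / μ), f y = μ • (y - p i))
    (N : ℕ) (i : I) (t : Fin N → I) (x : Fin m → ℝ)
    (hxK : x ∈ closedBall (p i) (2 / μ))
    (hfx : f x ∈ closedBall (ctr μ p N t) (2 / μ ^ N)) :
    x ∈ closedBall (ctr μ p (N+1) (Fin.cons i t)) (2 / μ ^ (N+1)) := by
  have hμ0 : (0:ℝ) < μ := by linarith
  have hfxe : f x = μ • (x - p i) := hf _ _ hxK
  rw [mem_closedBall, dist_eq_norm] at hfx ⊢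
  have hctr : ctr μ p (N+1) (Fin.cons i t) = p i + μ⁻¹ • ctr μ p N t := by
    simp [ctr]
  have hkey : x - ctr μ p (N+1) (Fin.cons i t) = μ⁻¹ • (f x - ctr μ p N t) := by
    rw [hfxe, hctr, smul_sub, smul_smul,
      inv_mul_cancel₀ (ne_of_gt hμ0), one_smul]
    abel
  rw [hkey, norm_smul, Real.norm_eq_abs, abs_of_pos (by positivity : (0:ℝ) < μ⁻¹)]
  calc μ⁻¹ * ‖f x - ctr μ p N t‖ ≤ μ⁻¹ * (2 / μ ^ N) := by gcongr
    _ = 2 / μ ^ (N+1) := by field_simp; ring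

end Stmt4Aux

namespace Stmt4Aux
set_option linter.unusedSectionVars false

variable {m : ℕ} {I : Type*} [Fintype I] [Nonempty I] {μ : ℝ} {p : I → (Fin m → ℝ)}
  {f : (Fin m → ℝ) → (Fin m → ℝ)}

lemma setEq (hμ : 2 < μ) (hp : ∀ i, ‖p i‖ < 1)
    (hf : ∀ i, ∀ y ∈ Metric.closedBall (p i) (2 / μ), f y = μ • (y - p i)) :
    ∀ N : ℕ, {x | ∀ n < N + 1, f^[n] x ∈ ⋃ i, closedBall (p i) (2 / μ)} =
      ⋃ s : Fin (N+1) → I, closedBall (ctr μ p (N+1) s) (2 / μ ^ (N+1)) := by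
  intro N
  induction N with
  | zero =>
    ext x
    constructor
    · intro hx
      have h0 : x ∈ ⋃ i, closedBall (p i) (2 / μ) := by simpa using hx 0 (by norm_num)
      obtain ⟨i, hi⟩ := mem_iUnion.mp h0
      exact mem_iUnion.mpr ⟨fun _ => i, by simpa [ctr] using hi⟩
    · intro hx n hn
      obtain ⟨s, hs⟩ := mem_iUnion.mp hx
      interval_cases n
      exact mem_iUnion.mpr ⟨s 0, by simpa [ctr] using hs⟩
  | succ N ih =>
    ext x
    rw [mem_setOf_eq, mem_iUnion]
    constructor
    · intro hx
      have hxK : x ∈ ⋃ i, closedBall (p i) (2 / μ) := by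
        simpa using hx 0 (Nat.succ_pos _)
      have hfx : f x ∈ {y | ∀ n < N + 1, f^[n] y ∈ ⋃ i, closedBall (p i) (2 / μ)} := by
        intro n hn
        rw [← Function.iterate_succ_apply]
        exact hx (n+1) (by omega)
      rw [ih] at hfx
      obtain ⟨t, ht⟩ := mem_iUnion.mp hfx
      obtain ⟨i, hi⟩ := mem_iUnion.mp hxK
      exact ⟨Fin.cons i t, bwd hμ hf (N+1) i t x hi ht⟩
    · rintro ⟨s, hs⟩ n hn
      match n with
      | 0 =>
        simp only [Function.iterate_zero, id_eq]
        exact mem_iUnion.mpr ⟨s 0, ball_subset hμ hp (N+1) s hs⟩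
      | (n+1) =>
        rw [Function.iterate_succ_apply]
        have hfx : f x ∈ closedBall (ctr μ p (N+1) (Fin.tail s)) (2 / μ ^ (N+1)) :=
          fwd hμ hp hf (N+1) s x hs
        have hfm : f x ∈ {y | ∀ k < N + 1, f^[k] y ∈ ⋃ i, closedBall (p i) (2 / μ)} := by
          rw [ih]; exact mem_iUnion.mpr ⟨Fin.tail s, hfx⟩
        exact hfm n (by omega)

lemma ballDisj (hμ : 2 < μ) (hp : ∀ i, ‖p i‖ < 1)
    (hdisj : Pairwise (Function.onFun Disjoint (fun i => closedBall (p i) (2 / μ))))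
    (hf : ∀ i, ∀ y ∈ Metric.closedBall (p i) (2 / μ), f y = μ • (y - p i)) :
    ∀ N : ℕ, ∀ s t : Fin N → I, s ≠ t →
      Disjoint (closedBall (ctr μ p N s) (2 / μ ^ N))
        (closedBall (ctr μ p N t) (2 / μ ^ N)) := by
  intro N
  induction N with
  | zero => intro s t hst; exact absurd (Subsingleton.elim s t) hst
  | succ N ih =>
    intro s t hst
    by_cases h0 : s 0 = t 0
    · have htail : Fin.tail s ≠ Fin.tail t := by
        intro h
        apply hst
        have := Fin.cons_self_tail s
        rw [← Fin.cons_self_tail s, ← Fin.cons_self_tail t, h0, h]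
      rw [Set.disjoint_left]
      intro x hxs hxt
      have h1 := fwd hμ hp hf N s x hxs
      have h2 := fwd hμ hp hf N t x hxt
      exact (Set.disjoint_left.mp (ih _ _ htail)) h1 h2
    · exact Set.disjoint_of_subset (ball_subset hμ hp N s) (ball_subset hμ hp N t)
        (hdisj h0)

lemma ctr_inj (hμ : 2 < μ) (hp : ∀ i, ‖p i‖ < 1)
    (hdisj : Pairwise (Function.onFun Disjoint (fun i => closedBall (p i) (2 / μ))))
    (hf : ∀ i, ∀ y ∈ Metric.closedBall (p i) (2 / μ), f y = μ • (y - p i))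
    (N : ℕ) : Function.Injective (ctr μ p N) := by
  intro s t h
  by_contra hst
  have hd := ballDisj hμ hp hdisj hf N s t hst
  have hmem : ctr μ p N s ∈ closedBall (ctr μ p N s) (2 / μ ^ N) :=
    mem_closedBall_self (by positivity)
  have hmem2 : ctr μ p N s ∈ closedBall (ctr μ p N t) (2 / μ ^ N) := by
    rw [h]; exact mem_closedBall_self (by positivity)
  exact Set.disjoint_left.mp hd hmem hmem2

end Stmt4Aux

namespace Stmt4Aux
set_option linter.unusedSectionVars false

variable {m : ℕ} {I : Type*} [Fintype I] [Nonempty I] {μ : ℝ} {p : I → (Fin m → ℝ)}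
  {f : (Fin m → ℝ) → (Fin m → ℝ)}

lemma smul_sub_self (c : ℝ) (v : Fin m → ℝ) : c • v - v = (c - 1) • v := by
  rw [sub_smul, one_smul]

/-- designated points of Λ inside each level-M ball -/
noncomputable def pt (μ : ℝ) (p : I → (Fin m → ℝ)) (i₀ : I) :
    (M : ℕ) → (Fin M → I) → (Fin m → ℝ)
  | 0, _ => (μ/(μ-1)) • p i₀
  | (M+1), s => p (s 0) + μ⁻¹ • pt μ p i₀ M (Fin.tail s)

lemma pt_norm (hμ : 2 < μ) (hp : ∀ i, ‖p i‖ < 1) (i₀ : I) (M : ℕ) (s : Fin M → I) :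
    ‖pt μ p i₀ M s‖ ≤ μ/(μ-1) := by
  have hμ0 : (0:ℝ) < μ := by linarith
  have hμ1 : (0:ℝ) < μ - 1 := by linarith
  have hr : (0:ℝ) < μ/(μ-1) := by positivity
  induction M with
  | zero =>
    rw [pt, norm_smul, Real.norm_eq_abs, abs_of_pos hr]
    nlinarith [(hp i₀).le, norm_nonneg (p i₀)]
  | succ M ih =>
    calc ‖pt μ p i₀ (M+1) s‖ ≤ ‖p (s 0)‖ + ‖μ⁻¹ • pt μ p i₀ M (Fin.tail s)‖ := norm_add_le _ _
      _ ≤ 1 + μ⁻¹ * (μ/(μ-1)) := by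
          rw [norm_smul, Real.norm_eq_abs, abs_of_pos (by positivity : (0:ℝ) < μ⁻¹)]
          gcongr
          · exact (hp _).le
          · exact ih _
      _ = μ/(μ-1) := by
          have hne : μ - 1 ≠ 0 := by linarith
          field_simp
          ring

lemma pt_mem_zero (hμ : 2 < μ) (hp : ∀ i, ‖p i‖ < 1) (i₀ : I) (s : Fin 0 → I) :
    pt μ p i₀ 0 s ∈ closedBall (p i₀) (2/μ) := by
  have hμ0 : (0:ℝ) < μ := by linarith
  have hμ1 : (0:ℝ) < μ - 1 := by linarith
  rw [mem_closedBall, dist_eq_norm, pt]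
  have h1 : (μ/(μ-1)) • p i₀ - p i₀ = (1/(μ-1)) • p i₀ := by
    rw [smul_sub_self]
    congr 1
    field_simp
    ring
  rw [h1, norm_smul, Real.norm_eq_abs, abs_of_pos (by positivity : (0:ℝ) < 1/(μ-1))]
  have h2 : 1/(μ-1) ≤ 2/μ := by
    rw [div_le_div_iff₀ hμ1 hμ0]; linarith
  nlinarith [(hp i₀).le, norm_nonneg (p i₀), (by positivity : (0:ℝ) < 1/(μ-1))]

lemma pt_mem_succ (hμ : 2 < μ) (hp : ∀ i, ‖p i‖ < 1) (i₀ : I) (M : ℕ) (s : Fin (M+1) → I) :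
    pt μ p i₀ (M+1) s ∈ closedBall (p (s 0)) (2/μ) := by
  have hμ0 : (0:ℝ) < μ := by linarith
  have hμ1 : (0:ℝ) < μ - 1 := by linarith
  rw [mem_closedBall, dist_eq_norm]
  have h1 : pt μ p i₀ (M+1) s - p (s 0) = μ⁻¹ • pt μ p i₀ M (Fin.tail s) := by
    rw [pt]; abel
  rw [h1, norm_smul, Real.norm_eq_abs, abs_of_pos (by positivity : (0:ℝ) < μ⁻¹)]
  have h2 : μ⁻¹ * (μ/(μ-1)) = 1/(μ-1) := by
    rw [eq_div_iff (by linarith : μ - (1:ℝ) ≠ 0)]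
    field_simp
  have h3 : 1/(μ-1) ≤ 2/μ := by
    rw [div_le_div_iff₀ hμ1 hμ0]; linarith
  calc μ⁻¹ * ‖pt μ p i₀ M (Fin.tail s)‖ ≤ μ⁻¹ * (μ/(μ-1)) := by
        gcongr; exact pt_norm hμ hp i₀ M _
    _ ≤ 2/μ := by rw [h2]; exact h3

lemma f_pt_zero (hμ : 2 < μ) (hp : ∀ i, ‖p i‖ < 1)
    (hf : ∀ i, ∀ y ∈ Metric.closedBall (p i) (2 / μ), f y = μ • (y - p i))
    (i₀ : I) (s : Fin 0 → I) : f (pt μ p i₀ 0 s) = pt μ p i₀ 0 s := by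
  have hμ0 : (0:ℝ) < μ := by linarith
  have hμ1 : (0:ℝ) < μ - 1 := by linarith
  rw [hf i₀ _ (pt_mem_zero hμ hp i₀ s), pt, smul_sub_self, smul_smul]
  congr 1
  have hne : μ - 1 ≠ 0 := by linarith
  field_simp
  ring

lemma f_pt_succ (hμ : 2 < μ) (hp : ∀ i, ‖p i‖ < 1)
    (hf : ∀ i, ∀ y ∈ Metric.closedBall (p i) (2 / μ), f y = μ • (y - p i))
    (i₀ : I) (M : ℕ) (s : Fin (M+1) → I) :
    f (pt μ p i₀ (M+1) s) = pt μ p i₀ M (Fin.tail s) := by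
  have hμ0 : (0:ℝ) < μ := by linarith
  rw [hf (s 0) _ (pt_mem_succ hμ hp i₀ M s)]
  have h1 : pt μ p i₀ (M+1) s - p (s 0) = μ⁻¹ • pt μ p i₀ M (Fin.tail s) := by
    rw [pt]; abel
  rw [h1, smul_smul, mul_inv_cancel₀ (ne_of_gt hμ0), one_smul]

lemma pt_lambda (hμ : 2 < μ) (hp : ∀ i, ‖p i‖ < 1)
    (hf : ∀ i, ∀ y ∈ Metric.closedBall (p i) (2 / μ), f y = μ • (y - p i))
    (i₀ : I) : ∀ n M (s : Fin M → I),
      f^[n] (pt μ p i₀ M s) ∈ ⋃ i, closedBall (p i) (2/μ) := by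
  intro n
  induction n with
  | zero =>
    intro M s
    match M with
    | 0 => exact mem_iUnion.mpr ⟨i₀, by simpa using pt_mem_zero hμ hp i₀ s⟩
    | (M+1) => exact mem_iUnion.mpr ⟨s 0, by simpa using pt_mem_succ hμ hp i₀ M s⟩
  | succ n ih =>
    intro M s
    rw [Function.iterate_succ_apply]
    match M with
    | 0 => rw [f_pt_zero hμ hp hf i₀ s]; exact ih 0 s
    | (M+1) => rw [f_pt_succ hμ hp hf i₀ M s]; exact ih M _

lemma pt_dist_ctr (hμ : 2 < μ) (hp : ∀ i, ‖p i‖ < 1) (i₀ : I) (M : ℕ) (s : Fin M → I) :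
    dist (pt μ p i₀ M s) (ctr μ p M s) ≤ μ⁻¹ ^ M * (μ/(μ-1)) := by
  have hμ0 : (0:ℝ) < μ := by linarith
  induction M with
  | zero =>
    rw [dist_eq_norm, ctr, sub_zero, pow_zero, one_mul]
    exact pt_norm hμ hp i₀ 0 s
  | succ M ih =>
    have h1 : pt μ p i₀ (M+1) s - ctr μ p (M+1) s
        = μ⁻¹ • (pt μ p i₀ M (Fin.tail s) - ctr μ p M (Fin.tail s)) := by
      rw [pt, ctr, smul_sub]; abel
    rw [dist_eq_norm, h1, norm_smul, Real.norm_eq_abs,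
      abs_of_pos (by positivity : (0:ℝ) < μ⁻¹), pow_succ, mul_comm (μ⁻¹ ^ M) μ⁻¹, mul_assoc]
    gcongr
    rw [← dist_eq_norm]
    exact ih _

/-- disjoint closed balls have centers more than 2r apart -/
lemma disjoint_ball_dist {a b : Fin m → ℝ} {r : ℝ} (hr : 0 ≤ r)
    (h : Disjoint (closedBall a r) (closedBall b r)) : 2 * r < dist a b := by
  by_contra hc
  push_neg at hc
  have h1 : midpoint ℝ a b ∈ closedBall a r := by
    rw [mem_closedBall, dist_midpoint_left]
    simp only [Real.norm_ofNat]
    linarith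
  have h2 : midpoint ℝ a b ∈ closedBall b r := by
    rw [mem_closedBall, dist_midpoint_right]
    simp only [Real.norm_ofNat]
    linarith
  exact Set.disjoint_left.mp h h1 h2

lemma pt_sep (hμ : 2 < μ) (hp : ∀ i, ‖p i‖ < 1)
    (hdisj : Pairwise (Function.onFun Disjoint (fun i => closedBall (p i) (2 / μ))))
    (hf : ∀ i, ∀ y ∈ Metric.closedBall (p i) (2 / μ), f y = μ • (y - p i))
    (i₀ : I) (M : ℕ) (s t : Fin M → I) (hst : s ≠ t) :
    2 * ((μ-2)/(μ-1)) * μ⁻¹ ^ M ≤ dist (pt μ p i₀ M s) (pt μ p i₀ M t) := by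
  have hμ0 : (0:ℝ) < μ := by linarith
  have hd : 2 * (2 / μ ^ M) < dist (ctr μ p M s) (ctr μ p M t) :=
    disjoint_ball_dist (by positivity) (ballDisj hμ hp hdisj hf M s t hst)
  have h1 := pt_dist_ctr hμ hp i₀ M s
  have h2 := pt_dist_ctr hμ hp i₀ M t
  have h4 := dist_triangle4 (ctr μ p M s) (pt μ p i₀ M s) (pt μ p i₀ M t) (ctr μ p M t)
  have e1 : dist (ctr μ p M s) (pt μ p i₀ M s) = dist (pt μ p i₀ M s) (ctr μ p M s) :=
    dist_comm _ _
  have e2 : dist (pt μ p i₀ M t) (ctr μ p M t) = dist (ctr μ p M t) (pt μ p i₀ M t) :=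
    dist_comm _ _
  have hpow : 2 / μ ^ M = 2 * μ⁻¹ ^ M := by
    rw [div_eq_mul_inv, inv_pow]
  have hne : μ - 1 ≠ 0 := by linarith
  have key : 2 * ((μ-2)/(μ-1)) * μ⁻¹ ^ M
      = 2 * (2 * μ⁻¹ ^ M) - 2 * (μ⁻¹ ^ M * (μ/(μ-1))) := by
    field_simp
    ring
  rw [key]
  rw [hpow] at hd
  linarith

end Stmt4Aux

namespace Stmt4Aux
set_option linter.unusedSectionVars false

open Metric Set

variable {m : ℕ} {I : Type*} [Fintype I] [Nonempty I] {μ : ℝ} {p : I → (Fin m → ℝ)}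
  {f : (Fin m → ℝ) → (Fin m → ℝ)}

lemma lambda_subset (hμ : 2 < μ) (hp : ∀ i, ‖p i‖ < 1)
    (hf : ∀ i, ∀ y ∈ Metric.closedBall (p i) (2 / μ), f y = μ • (y - p i)) (N : ℕ) :
    {x | ∀ n : ℕ, f^[n] x ∈ ⋃ i, closedBall (p i) (2 / μ)} ⊆
      ⋃ s : Fin (N+1) → I, closedBall (ctr μ p (N+1) s) (2 / μ ^ (N+1)) := by
  intro x hx
  rw [← setEq hμ hp hf N]
  exact fun n _ => hx n

lemma cover_le (hμ : 2 < μ) (hp : ∀ i, ‖p i‖ < 1)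
    (hdisj : Pairwise (Function.onFun Disjoint (fun i => closedBall (p i) (2 / μ))))
    (hf : ∀ i, ∀ y ∈ Metric.closedBall (p i) (2 / μ), f y = μ • (y - p i))
    (N : ℕ) (ε : ℝ) (hε : 2 / μ ^ (N+1) < ε) :
    coverNum {x | ∀ n : ℕ, f^[n] x ∈ ⋃ i, closedBall (p i) (2 / μ)} ε
      ≤ (Fintype.card I) ^ (N+1) := by
  classical
  set t : Finset (Fin m → ℝ) := Finset.image (ctr μ p (N+1)) Finset.univ with ht
  have hcard : t.card = (Fintype.card I) ^ (N+1) := by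
    rw [ht, Finset.card_image_of_injective _ (ctr_inj hμ hp hdisj hf (N+1)),
      Finset.card_univ, Fintype.card_fun]
    simp
  have hcov : {x | ∀ n : ℕ, f^[n] x ∈ ⋃ i, closedBall (p i) (2 / μ)} ⊆
      ⋃ x ∈ t, Metric.ball x ε := by
    intro x hx
    obtain ⟨s, hs⟩ := mem_iUnion.mp (lambda_subset hμ hp hf N hx)
    refine mem_iUnion₂.mpr ⟨ctr μ p (N+1) s, ?_, ?_⟩
    · exact Finset.mem_image.mpr ⟨s, Finset.mem_univ s, rfl⟩
    · rw [mem_ball]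
      exact lt_of_le_of_lt (mem_closedBall.mp hs) hε
  exact le_trans (Nat.sInf_le ⟨t, rfl, hcov⟩) (le_of_eq hcard)

lemma cover_exists (hμ : 2 < μ) (hp : ∀ i, ‖p i‖ < 1)
    (hdisj : Pairwise (Function.onFun Disjoint (fun i => closedBall (p i) (2 / μ))))
    (hf : ∀ i, ∀ y ∈ Metric.closedBall (p i) (2 / μ), f y = μ • (y - p i))
    (ε : ℝ) (hε : 0 < ε) :
    {n : ℕ | ∃ t : Finset (Fin m → ℝ), t.card = n ∧
      {x | ∀ n : ℕ, f^[n] x ∈ ⋃ i, closedBall (p i) (2 / μ)} ⊆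
        ⋃ x ∈ t, Metric.ball x ε}.Nonempty := by
  classical
  have hμ0 : (0:ℝ) < μ := by linarith
  obtain ⟨N, hN⟩ := pow_unbounded_of_one_lt (2/ε) (by linarith : (1:ℝ) < μ)
  have h2 : 2 / μ ^ (N+1) < ε := by
    rw [div_lt_iff₀ (by positivity)]
    rw [div_lt_iff₀ hε] at hN
    have : μ ^ N ≤ μ ^ (N+1) := pow_le_pow_right₀ (by linarith) (by omega)
    nlinarith [pow_pos hμ0 N]
  set t : Finset (Fin m → ℝ) := Finset.image (ctr μ p (N+1)) Finset.univ with ht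
  refine ⟨t.card, t, rfl, ?_⟩
  intro x hx
  obtain ⟨s, hs⟩ := mem_iUnion.mp (lambda_subset hμ hp hf N hx)
  refine mem_iUnion₂.mpr ⟨ctr μ p (N+1) s, ?_, ?_⟩
  · exact Finset.mem_image.mpr ⟨s, Finset.mem_univ s, rfl⟩
  · rw [mem_ball]
    exact lt_of_le_of_lt (mem_closedBall.mp hs) h2

lemma le_cover (hμ : 2 < μ) (hp : ∀ i, ‖p i‖ < 1)
    (hdisj : Pairwise (Function.onFun Disjoint (fun i => closedBall (p i) (2 / μ))))
    (hf : ∀ i, ∀ y ∈ Metric.closedBall (p i) (2 / μ), f y = μ • (y - p i))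
    (M : ℕ) (ε : ℝ) (hε : 0 < ε) (hsep : 2 * ε ≤ 2 * ((μ-2)/(μ-1)) * μ⁻¹ ^ M) :
    (Fintype.card I) ^ M ≤
      coverNum {x | ∀ n : ℕ, f^[n] x ∈ ⋃ i, closedBall (p i) (2 / μ)} ε := by
  classical
  set Λ := {x | ∀ n : ℕ, f^[n] x ∈ ⋃ i, closedBall (p i) (2 / μ)} with hΛ
  have hmem : coverNum Λ ε ∈ {n : ℕ | ∃ t : Finset (Fin m → ℝ), t.card = n ∧
      Λ ⊆ ⋃ x ∈ t, Metric.ball x ε} :=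
    Nat.sInf_mem (cover_exists hμ hp hdisj hf ε hε)
  obtain ⟨t, hcard, hcov⟩ := hmem
  have i₀ : I := Classical.arbitrary I
  have hpts : ∀ s : Fin M → I, pt μ p i₀ M s ∈ Λ := fun s n => pt_lambda hμ hp hf i₀ n M s
  have hchoice : ∀ s : Fin M → I, ∃ q ∈ t, pt μ p i₀ M s ∈ Metric.ball q ε := by
    intro s
    have h := hcov (hpts s)
    simpa using mem_iUnion₂.mp h
  choose q hqt hqb using hchoice
  have hinj : Function.Injective q := by
    intro s s' hq
    by_contra hss
    have hsep' := pt_sep hμ hp hdisj hf i₀ M s s' hss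
    have d1 : dist (pt μ p i₀ M s) (q s) < ε := mem_ball.mp (hqb s)
    have d2 : dist (pt μ p i₀ M s') (q s') < ε := mem_ball.mp (hqb s')
    have := dist_triangle (pt μ p i₀ M s) (q s) (pt μ p i₀ M s')
    rw [hq] at d1
    have : dist (pt μ p i₀ M s) (pt μ p i₀ M s') < 2 * ε := by
      calc dist (pt μ p i₀ M s) (pt μ p i₀ M s')
          ≤ dist (pt μ p i₀ M s) (q s') + dist (q s') (pt μ p i₀ M s') := dist_triangle _ _ _
        _ < ε + ε := by
            rw [dist_comm (q s') (pt μ p i₀ M s')]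
            exact add_lt_add d1 d2
        _ = 2 * ε := by ring
    linarith
  have hle : Fintype.card (Fin M → I) ≤ Fintype.card {x // x ∈ t} := by
    exact Fintype.card_le_of_injective (fun s => ⟨q s, hqt s⟩)
      (fun s s' h => hinj (congrArg Subtype.val h))
  rw [Fintype.card_coe, hcard] at hle
  rw [Fintype.card_fun] at hle
  simpa using hle

end Stmt4Aux


open Metric Set Filter Real

namespace Stmt4Aux
set_option linter.unusedSectionVars false
set_option maxHeartbeats 1000000

variable {m : ℕ} {I : Type*} [Fintype I] [Nonempty I] {μ : ℝ} {p : I → (Fin m → ℝ)}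
  {f : (Fin m → ℝ) → (Fin m → ℝ)}

lemma g_bounds (hμ : 2 < μ) (hp : ∀ i, ‖p i‖ < 1)
    (hdisj : Pairwise (Function.onFun Disjoint (fun i => closedBall (p i) (2 / μ))))
    (hf : ∀ i, ∀ y ∈ Metric.closedBall (p i) (2 / μ), f y = μ • (y - p i))
    (ε : ℝ) (hε : 0 < ε) (hε1 : ε < 1) (hεA : ε < (μ-2)/(μ-1)) :
    Real.log (Fintype.card I) / Real.log μ
      + (Real.log ((μ-2)/(μ-1)) / Real.log μ - 1) * Real.log (Fintype.card I)
          / Real.log (1/ε)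
      ≤ Real.log (coverNum {x | ∀ n : ℕ, f^[n] x ∈ ⋃ i, closedBall (p i) (2 / μ)} ε)
          / Real.log (1/ε)
    ∧ Real.log (coverNum {x | ∀ n : ℕ, f^[n] x ∈ ⋃ i, closedBall (p i) (2 / μ)} ε)
          / Real.log (1/ε)
      ≤ Real.log (Fintype.card I) / Real.log μ
      + (Real.log 2 / Real.log μ + 1) * Real.log (Fintype.card I) / Real.log (1/ε) := by
  have hμ0 : (0:ℝ) < μ := by linarith
  have hμ1 : (1:ℝ) < μ := by linarith
  have hμne : μ ≠ 1 := by linarith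
  have hlogμ : 0 < Real.log μ := Real.log_pos hμ1
  have hc1 : (1:ℝ) ≤ (Fintype.card I : ℝ) := by exact_mod_cast Fintype.card_pos
  have hlogc : 0 ≤ Real.log (Fintype.card I) := Real.log_nonneg hc1
  have hA0 : (0:ℝ) < (μ-2)/(μ-1) := div_pos (by linarith) (by linarith)
  have hL : 0 < Real.log (1/ε) := Real.log_pos (by rw [lt_div_iff₀ hε]; linarith)
  have hLne : Real.log (1/ε) ≠ 0 := ne_of_gt hL
  have hLlog : Real.log (1/ε) = - Real.log ε := by rw [one_div, Real.log_inv]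
  set Λ := {x | ∀ n : ℕ, f^[n] x ∈ ⋃ i, closedBall (p i) (2 / μ)} with hΛ
  have hcov1 : 1 ≤ coverNum Λ ε := by
    have h0 := le_cover hμ hp hdisj hf 0 ε hε (by rw [pow_zero, mul_one]; linarith)
    rwa [pow_zero] at h0
  have hcovR : (1:ℝ) ≤ (coverNum Λ ε : ℝ) := by exact_mod_cast hcov1
  constructor
  · -- lower bound
    set rM := Real.logb μ ((μ-2)/(μ-1)/ε) with hrM
    have hAε : (1:ℝ) < (μ-2)/(μ-1)/ε := by rw [lt_div_iff₀ hε]; linarith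
    have hrM0 : 0 ≤ rM := Real.logb_nonneg hμ1 hAε.le
    set M := ⌊rM⌋₊ with hM
    have hμM : μ ^ M ≤ (μ-2)/(μ-1)/ε := by
      calc (μ:ℝ) ^ M = μ ^ (M:ℝ) := (Real.rpow_natCast μ M).symm
        _ ≤ μ ^ rM := Real.rpow_le_rpow_of_exponent_le hμ1.le (Nat.floor_le hrM0)
        _ = (μ-2)/(μ-1)/ε := Real.rpow_logb hμ0 hμne (by positivity)
    have h2 : μ ^ M * ε ≤ (μ-2)/(μ-1) := (le_div_iff₀ hε).mp hμM
    have hsep : 2 * ε ≤ 2 * ((μ-2)/(μ-1)) * μ⁻¹ ^ M := by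
      have h3 : ε ≤ (μ-2)/(μ-1) * μ⁻¹ ^ M := by
        rw [inv_pow, ← div_eq_mul_inv, le_div_iff₀ (pow_pos hμ0 M)]
        linarith [h2]
      rw [mul_assoc]
      linarith
    have hcovM := le_cover hμ hp hdisj hf M ε hε hsep
    have hlog1 : (M:ℝ) * Real.log (Fintype.card I) ≤ Real.log (coverNum Λ ε) := by
      have hcast : ((Fintype.card I : ℝ)) ^ M ≤ (coverNum Λ ε : ℝ) := by
        exact_mod_cast hcovM
      calc (M:ℝ) * Real.log (Fintype.card I) = Real.log ((Fintype.card I : ℝ) ^ M) :=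
            (Real.log_pow ((Fintype.card I : ℝ)) M).symm
        _ ≤ Real.log (coverNum Λ ε) :=
            Real.log_le_log (by positivity) hcast
    have hrM_eq : rM = (Real.log ((μ-2)/(μ-1)) + Real.log (1/ε)) / Real.log μ := by
      rw [hrM, Real.logb, Real.log_div (ne_of_gt hA0) (ne_of_gt hε), hLlog]
      ring
    have hfloor : rM - 1 ≤ (M:ℝ) := (Nat.sub_one_lt_floor rM).le
    have hkey : (Real.log (Fintype.card I) / Real.log μ
        + (Real.log ((μ-2)/(μ-1)) / Real.log μ - 1) * Real.log (Fintype.card I)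
          / Real.log (1/ε)) * Real.log (1/ε)
        = (rM - 1) * Real.log (Fintype.card I) := by
      rw [hrM_eq]
      field_simp
      ring
    rw [le_div_iff₀ hL, hkey]
    calc (rM - 1) * Real.log (Fintype.card I)
        ≤ (M:ℝ) * Real.log (Fintype.card I) := mul_le_mul_of_nonneg_right hfloor hlogc
      _ ≤ Real.log (coverNum Λ ε) := hlog1
  · -- upper bound
    set rN := Real.logb μ (2/ε) with hrN
    have hrN0 : 0 ≤ rN := Real.logb_nonneg hμ1 (by rw [le_div_iff₀ hε]; linarith)
    set N' := ⌊rN⌋₊ with hN'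
    have hμN : 2/ε < μ ^ (N'+1) := by
      calc 2/ε = μ ^ rN := (Real.rpow_logb hμ0 hμne (by positivity)).symm
        _ < μ ^ (((N'+1 : ℕ)):ℝ) := by
            apply Real.rpow_lt_rpow_of_exponent_lt hμ1
            exact_mod_cast Nat.lt_floor_add_one rN
        _ = μ ^ (N'+1) := Real.rpow_natCast _ _
    have hε2 : 2/μ^(N'+1) < ε := by
      rw [div_lt_iff₀ (pow_pos hμ0 _)]
      rw [div_lt_iff₀ hε] at hμN
      linarith
    have hcovN := cover_le hμ hp hdisj hf N' ε hε2
    have hlog2 : Real.log (coverNum Λ ε) ≤ ((N'+1:ℕ):ℝ) * Real.log (Fintype.card I) := by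
      have hcast : ((coverNum Λ ε : ℝ)) ≤ ((Fintype.card I : ℝ)) ^ (N'+1) := by
        exact_mod_cast hcovN
      calc Real.log (coverNum Λ ε) ≤ Real.log ((Fintype.card I : ℝ) ^ (N'+1)) :=
            Real.log_le_log (by linarith) hcast
        _ = ((N'+1:ℕ):ℝ) * Real.log (Fintype.card I) := by
            rw [Real.log_pow]
    have hrN_eq : rN = (Real.log 2 + Real.log (1/ε)) / Real.log μ := by
      rw [hrN, Real.logb, Real.log_div two_ne_zero (ne_of_gt hε), hLlog]
      ring
    have hkey2 : (Real.log (Fintype.card I) / Real.log μ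
        + (Real.log 2 / Real.log μ + 1) * Real.log (Fintype.card I)
          / Real.log (1/ε)) * Real.log (1/ε)
        = (rN + 1) * Real.log (Fintype.card I) := by
      rw [hrN_eq]
      field_simp
      ring
    rw [div_le_iff₀ hL, hkey2]
    calc Real.log (coverNum Λ ε) ≤ ((N'+1:ℕ):ℝ) * Real.log (Fintype.card I) := hlog2
      _ ≤ (rN + 1) * Real.log (Fintype.card I) := by
          apply mul_le_mul_of_nonneg_right _ hlogc
          push_cast
          linarith [Nat.floor_le hrN0]

end Stmt4Aux

namespace Stmt4Aux
set_option linter.unusedSectionVars false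
set_option maxHeartbeats 1000000

open Metric Set Filter Real

variable {m : ℕ} {I : Type*} [Fintype I] [Nonempty I] {μ : ℝ} {p : I → (Fin m → ℝ)}
  {f : (Fin m → ℝ) → (Fin m → ℝ)}

lemma dim_tendsto (hμ : 2 < μ) (hp : ∀ i, ‖p i‖ < 1)
    (hdisj : Pairwise (Function.onFun Disjoint (fun i => closedBall (p i) (2 / μ))))
    (hf : ∀ i, ∀ y ∈ Metric.closedBall (p i) (2 / μ), f y = μ • (y - p i)) :
    Tendsto (fun ε : ℝ => Real.log
        (coverNum {x | ∀ n : ℕ, f^[n] x ∈ ⋃ i, closedBall (p i) (2 / μ)} ε)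
        / Real.log (1/ε)) (nhdsWithin 0 (Set.Ioi 0))
      (nhds (Real.log (Fintype.card I) / Real.log μ)) := by
  set D := Real.log (Fintype.card I) / Real.log μ with hD
  set Clo := (Real.log ((μ-2)/(μ-1)) / Real.log μ - 1) * Real.log (Fintype.card I) with hClo
  set Cup := (Real.log 2 / Real.log μ + 1) * Real.log (Fintype.card I) with hCup
  have hL : Tendsto (fun ε : ℝ => Real.log (1/ε)) (nhdsWithin 0 (Set.Ioi 0)) atTop := by
    have he : (fun ε : ℝ => Real.log (1/ε)) = (fun x : ℝ => -x) ∘ Real.log := by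
      funext ε; simp [one_div, Real.log_inv]
    rw [he]
    exact tendsto_neg_atBot_atTop.comp Real.tendsto_log_nhdsGT_zero
  have baux : ∀ C : ℝ, Tendsto (fun ε : ℝ => D + C / Real.log (1/ε))
      (nhdsWithin 0 (Set.Ioi 0)) (nhds D) := by
    intro C
    have h2 : Tendsto (fun L : ℝ => C / L) atTop (nhds 0) := by
      simpa [div_eq_mul_inv] using tendsto_inv_atTop_zero.const_mul C
    have h1 : Tendsto (fun L : ℝ => D + C / L) atTop (nhds (D + 0)) :=
      tendsto_const_nhds.add h2
    simpa [Function.comp_def] using h1.comp hL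
  have hδ : (0:ℝ) < min ((μ-2)/(μ-1)) 1 :=
    lt_min (div_pos (by linarith) (by linarith)) one_pos
  have hmem : Set.Ioo (0:ℝ) (min ((μ-2)/(μ-1)) 1) ∈ nhdsWithin (0:ℝ) (Set.Ioi 0) :=
    Ioo_mem_nhdsGT_of_mem ⟨le_refl _, hδ⟩
  apply tendsto_of_tendsto_of_tendsto_of_le_of_le' (baux Clo) (baux Cup)
  · filter_upwards [hmem] with ε hε
    exact (g_bounds hμ hp hdisj hf ε hε.1
      (lt_of_lt_of_le hε.2 (min_le_right _ _))
      (lt_of_lt_of_le hε.2 (min_le_left _ _))).1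
  · filter_upwards [hmem] with ε hε
    exact (g_bounds hμ hp hdisj hf ε hε.1
      (lt_of_lt_of_le hε.2 (min_le_right _ _))
      (lt_of_lt_of_le hε.2 (min_le_left _ _))).2

end Stmt4Aux

/-- The affine expanding system `f⁺(y) = μ(y - p⁺ᵢ)` on disjoint sup-norm balls
`B(p⁺ᵢ, 2/μ)`: the `N`-th approximation of the maximal forward invariant set is a
disjoint union of `(#I)^N` closed balls of radius `2/μ^N`, and the upper box dimension
of `Λˢ(K⁺, f⁺)` equals `log (#I) / log μ`. -/
theorem stmt4 {m : ℕ} {I : Type*} [Fintype I] [Nonempty I] (μ : ℝ) (hμ : 2 < μ)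
    (p : I → (Fin m → ℝ)) (hp : ∀ i, ‖p i‖ < 1)
    (hdisj : Pairwise (Function.onFun Disjoint (fun i => Metric.closedBall (p i) (2 / μ))))
    (f : (Fin m → ℝ) → (Fin m → ℝ))
    (hf : ∀ i, ∀ y ∈ Metric.closedBall (p i) (2 / μ), f y = μ • (y - p i)) :
    (∀ N : ℕ, 1 ≤ N → ∃ c : (Fin N → I) → (Fin m → ℝ),
      Function.Injective c ∧
      Pairwise (Function.onFun Disjoint (fun s => Metric.closedBall (c s) (2 / μ ^ N))) ∧
      {x | ∀ n < N, f^[n] x ∈ ⋃ i, Metric.closedBall (p i) (2 / μ)} =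
        ⋃ s : Fin N → I, Metric.closedBall (c s) (2 / μ ^ N)) ∧
    ubDim {x | ∀ n : ℕ, f^[n] x ∈ ⋃ i, Metric.closedBall (p i) (2 / μ)} =
      Real.log (Fintype.card I) / Real.log μ := by
  constructor
  · intro N hN
    obtain ⟨N', rfl⟩ : ∃ N', N = N' + 1 := ⟨N - 1, by omega⟩
    refine ⟨Stmt4Aux.ctr μ p (N' + 1), Stmt4Aux.ctr_inj hμ hp hdisj hf (N' + 1), ?_, ?_⟩
    · intro s t hst
      exact Stmt4Aux.ballDisj hμ hp hdisj hf (N' + 1) s t hst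
    · exact Stmt4Aux.setEq hμ hp hf N'
  · exact (Stmt4Aux.dim_tendsto hμ hp hdisj hf).limsup_eq
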